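/- Let P be a regular partition of K_{m_1(n_1),m_2(n_2)} such that τ(P) is asymmetric, let G be a connected component of τ'(P) containing at least one edge, and define p by |V(G)| = n_1·|E(G)|/2 + p. Then: (1) if j_{n_1,m_2} = ⌊(m_2-1)/2⌋, then w(G) ≤ m_2·r·|E(G)|; (2) if j_{n_1,m_2} < ⌊(m_2-1)/2⌋ and p ≤ |E(G)|·(n_1/2 - 1), then w(G) ≤ m_2·r·|E(G)|; (3) if v(G) > 0, then j_{n_1,m_2} < ⌊(m_2-1)/2⌋ and G is a tree, and moreover v(G) ≤ m_2 - 2·j_{n_1,m_2} - d(G). -/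

import Mathlib

/-- Vertex type of the complete multipartite graph with `m1` parts of size `n1`
and `m2` parts of size `n2`.  The parts of size `n2` are indexed by `Fin m2`
(these play the role of `X_1, …, X_{m2}` in the paper). -/
abbrev MPV (m1 n1 m2 n2 : ℕ) : Type :=
  (Fin m1 × Fin n1) ⊕ (Fin m2 × Fin n2)

/-- The part (maximal independent set) containing a vertex. -/
def partOf {m1 n1 m2 n2 : ℕ} (v : MPV m1 n1 m2 n2) : Fin m1 ⊕ Fin m2 :=
  Sum.map Prod.fst Prod.fst v

/-- The complete multipartite graph `K_{m1(n1), m2(n2)}`. -/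
def KMP (m1 n1 m2 n2 : ℕ) : SimpleGraph (MPV m1 n1 m2 n2) :=
  SimpleGraph.comap partOf ⊤

/-- `P` is a regular partition: a partition of the vertex set each of whose parts
meets each maximal independent set in at most one vertex. -/
def IsRegularPartition {m1 n1 m2 n2 : ℕ} (P : Set (Set (MPV m1 n1 m2 n2))) : Prop :=
  Setoid.IsPartition P ∧
    ∀ p ∈ P, ∀ i : Fin m1 ⊕ Fin m2, {v | v ∈ p ∧ partOf v = i}.Subsingleton

/-- The incidence relation of the hypergraph `τ(P)`: its vertices are the parts of `P`,
its edges are the maximal independent sets, and a part is incident to a maximal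
independent set iff they intersect (for a regular partition, iff they intersect in
exactly one vertex). -/
def tauInc {m1 n1 m2 n2 : ℕ} (P : Set (Set (MPV m1 n1 m2 n2))) :
    ↥P → (Fin m1 ⊕ Fin m2) → Prop :=
  fun p i => ∃ v ∈ p.1, partOf v = i

/-- A hypergraph, given by its incidence relation, is asymmetric: its only
automorphism (pair of permutations of vertices and edges preserving incidence)
is the identity. -/
def HypAsymmetric {Vh Eh : Type*} (I : Vh → Eh → Prop) : Prop :=
  ∀ (σ : Equiv.Perm Vh) (τ : Equiv.Perm Eh),
    (∀ v e, I v e ↔ I (σ v) (τ e)) → σ = 1 ∧ τ = 1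

variable {m1 n1 m2 n2 : ℕ}

/-- Incidence of the hypergraph `τ'(P)`: only the `m1` edges of size `n1` are kept. -/
def tauInc' (P : Set (Set (MPV m1 n1 m2 n2))) (p : ↥P) (j : Fin m1) : Prop :=
  tauInc P p (Sum.inl j)

/-- The label of a vertex of `τ'(P)`: the set of indices `i ≤ m2` with the vertex
incident to the `n2`-edge `X_i`. -/
def labelOf (P : Set (Set (MPV m1 n1 m2 n2))) (p : ↥P) : Set (Fin m2) :=
  {i | tauInc P p (Sum.inr i)}

/-- The weight of a vertex of `τ'(P)`: the cardinality of its label. -/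
noncomputable def wtv (P : Set (Set (MPV m1 n1 m2 n2))) (p : ↥P) : ℕ :=
  (labelOf P p).ncard

/-- The degree of a vertex in `τ'(P)`. -/
noncomputable def degE (P : Set (Set (MPV m1 n1 m2 n2))) (p : ↥P) : ℕ :=
  {j : Fin m1 | tauInc' P p j}.ncard

/-- The incidence (bipartite) graph of `τ'(P)`, used to speak about its connected
components. -/
def incTG (P : Set (Set (MPV m1 n1 m2 n2))) : SimpleGraph (↥P ⊕ Fin m1) :=
  SimpleGraph.fromRel (fun a b => ∃ p j, a = Sum.inl p ∧ b = Sum.inr j ∧ tauInc' P p j)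

/-- The vertex set of a connected component of `τ'(P)`. -/
def compV (P : Set (Set (MPV m1 n1 m2 n2))) (c : (incTG P).ConnectedComponent) :
    Set ↥P :=
  {p | (incTG P).connectedComponentMk (Sum.inl p) = c}

/-- The edge set of a connected component of `τ'(P)`. -/
def compE (P : Set (Set (MPV m1 n1 m2 n2))) (c : (incTG P).ConnectedComponent) :
    Set (Fin m1) :=
  {j | (incTG P).connectedComponentMk (Sum.inr j) = c}

/-- The weight `w(G)` of a connected component `G` of `τ'(P)`. -/
noncomputable def wComp (P : Set (Set (MPV m1 n1 m2 n2)))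
    (c : (incTG P).ConnectedComponent) : ℕ :=
  ∑ᶠ p ∈ compV P c, wtv P p

/-- `μ(G) = Σ_{v : deg v > 2} (deg v - 2)` for a component `G` of `τ'(P)`. -/
noncomputable def muComp (P : Set (Set (MPV m1 n1 m2 n2)))
    (c : (incTG P).ConnectedComponent) : ℕ :=
  ∑ᶠ p ∈ compV P c, (degE P p - 2)

/-- `deg_1(e)`: the number of degree-1 vertices of the edge `e` of `τ'(P)`. -/
noncomputable def deg1E (P : Set (Set (MPV m1 n1 m2 n2))) (e : Fin m1) : ℕ :=
  {p | tauInc' P p e ∧ degE P p = 1}.ncard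

/-- The total weight of the degree-1 vertices of the edge `e` of `τ'(P)`. -/
noncomputable def wSE (P : Set (Set (MPV m1 n1 m2 n2))) (e : Fin m1) : ℕ :=
  ∑ᶠ p ∈ {p | tauInc' P p e ∧ degE P p = 1}, wtv P p

/-- `Σ_{i=0}^{t-1} C(m,i)`. -/
def binPartial (m t : ℕ) : ℕ :=
  ∑ i ∈ Finset.range t, Nat.choose m i

/-- The largest `t` (with `t = j' + 1` in the notation of the paper) such that
`Σ_{i=0}^{t-1} C(m,i) ≤ y`. -/
def wBt (m y : ℕ) : ℕ :=
  Nat.findGreatest (fun t => binPartial m t ≤ y) (m + 1)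

/-- The quantity `w_y`: writing `y = Σ_{i=0}^{j'} C(m,i) + k'` with `j' ≥ -1` and either
`0 ≤ k' < C(m,j'+1)`, or `k' = 0` and `j' = m`, define
`w_y = Σ_{i=0}^{j'} (m-i)·C(m,i) + k'(m-j'-1)`. -/
def wB (m y : ℕ) : ℕ :=
  (∑ i ∈ Finset.range (wBt m y), (m - i) * Nat.choose m i)
    + (y - binPartial m (wBt m y)) * (m - wBt m y)

/-- The number of defects `d(G)` of a component `G` of `τ'(P)`, counted with
multiplicity: each vertex `v` of degree at least `2` contributes `m2 - w(v)`, and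
each edge `e` contributes `w_{deg_1 e}` minus the weight of its degree-1 vertices. -/
noncomputable def dComp (P : Set (Set (MPV m1 n1 m2 n2)))
    (c : (incTG P).ConnectedComponent) : ℕ :=
  (∑ᶠ p ∈ {p ∈ compV P c | 2 ≤ degE P p}, (m2 - wtv P p))
    + ∑ᶠ e ∈ compE P c, (wB m2 (deg1E P e) - wSE P e)

lemma finsum_mem_finite {α M : Type*} [AddCommMonoid M] {s : Set α} (f : α → M)
    (hs : s.Finite) : ∑ᶠ i ∈ s, f i = ∑ i ∈ hs.toFinset, f i := by
  rw [← finsum_mem_coe_finset]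
  exact finsum_mem_congr hs.coe_toFinset.symm (fun _ _ => rfl)

lemma binPartial_succ (m t : ℕ) : binPartial m (t + 1) = binPartial m t + Nat.choose m t := by
  simp [binPartial, Finset.sum_range_succ]

lemma binPartial_mono (m : ℕ) : Monotone (binPartial m) := by
  intro a b hab
  exact Finset.sum_le_sum_of_subset (Finset.range_subset_range.2 hab)

lemma wBt_le (m y : ℕ) : wBt m y ≤ m + 1 := Nat.findGreatest_le _

lemma binPartial_wBt_le (m y : ℕ) : binPartial m (wBt m y) ≤ y := by
  classical
  exact Nat.findGreatest_spec (P := fun t => binPartial m t ≤ y) (Nat.zero_le _)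
    (by simp [binPartial])

lemma wBt_ge (m y u : ℕ) (hu : u ≤ m + 1) (h : binPartial m u ≤ y) : u ≤ wBt m y := by
  classical
  exact Nat.le_findGreatest hu h

lemma wBt_lt (m y u : ℕ) (h : y < binPartial m u) : wBt m y < u := by
  by_contra hc
  push_neg at hc
  exact absurd (le_trans (binPartial_mono m hc) (binPartial_wBt_le m y)) (by omega)

lemma lt_binPartial_wBt_succ (m y : ℕ) (h : wBt m y < m + 1) :
    y < binPartial m (wBt m y + 1) := by
  by_contra hc
  push_neg at hc
  have h2 : wBt m y + 1 ≤ wBt m y := wBt_ge m y (wBt m y + 1) (by omega) hc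
  omega

lemma wBt_saturate (m y : ℕ) (h : wBt m y = m + 1) : binPartial m (m+1) ≤ y := by
  have := binPartial_wBt_le m y; rwa [h] at this

lemma wB_succ (m y : ℕ) : wB m (y + 1) = wB m y + (m - wBt m y) := by
  classical
  set t := wBt m y with ht
  have hbp : binPartial m t ≤ y := binPartial_wBt_le m y
  have htle : t ≤ m + 1 := wBt_le m y
  by_cases hcase : y + 1 < binPartial m (t + 1)
  · -- wBt (y+1) = t
    have h1 : t ≤ wBt m (y + 1) := wBt_ge m (y+1) t htle (le_trans hbp (by omega))
    have h2 : wBt m (y + 1) < t + 1 := wBt_lt m (y+1) t.succ hcase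
    have heq : wBt m (y+1) = t := by omega
    rw [wB, wB, heq, ← ht]
    have : y + 1 - binPartial m t = (y - binPartial m t) + 1 := by omega
    rw [this, add_mul, one_mul, add_assoc]
  · -- boundary or saturation
    by_cases hsat : t = m + 1
    · -- saturation: y ≥ binPartial (m+1) = 2^m; increments 0
      have heq : wBt m (y+1) = m + 1 := by
        have := wBt_ge m (y+1) (m+1) le_rfl (le_trans (wBt_saturate m y hsat) (by omega))
        have := wBt_le m (y+1)
        omega
      rw [wB, wB, heq, ← ht, hsat]
      have hm : m - (m+1) = 0 := by omega
      simp [hm]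
    · -- boundary: y+1 = binPartial (t+1)
      have hlt : y < binPartial m (t+1) := lt_binPartial_wBt_succ m y (by omega)
      have hb : y + 1 = binPartial m (t + 1) := by omega
      have heq : wBt m (y+1) = t + 1 := by
        have h1 : t + 1 ≤ wBt m (y+1) := by
          refine wBt_ge m (y+1) (t+1) (by omega) (by omega)
        have h2 : wBt m (y+1) < t + 2 := by
          rcases Nat.lt_or_ge t m with h' | h'
          · refine wBt_lt m (y+1) (t+2) ?_
            have hb2 : binPartial m (t+2) = binPartial m (t+1) + Nat.choose m (t+1) :=
              binPartial_succ m (t+1)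
            have hpos : 0 < Nat.choose m (t+1) := Nat.choose_pos (by omega)
            omega
          · have := wBt_le m (y+1); omega
        omega
      have hC : 0 < Nat.choose m t := by
        have := binPartial_succ m t
        omega
      rw [wB, wB, heq, ← ht]
      rw [Finset.sum_range_succ]
      have h0 : y + 1 - binPartial m (t+1) = 0 := by omega
      have h1 : y - binPartial m t = Nat.choose m t - 1 := by
        have := binPartial_succ m t; omega
      rw [h0, h1]
      have : (Nat.choose m t - 1) * (m - t) + (m - t) = Nat.choose m t * (m - t) := by
        have : Nat.choose m t - 1 + 1 = Nat.choose m t := by omega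
        nlinarith [this]
      rw [zero_mul, add_zero, add_assoc, this, mul_comm (m-t) (Nat.choose m t)]

lemma wBt_mono (m : ℕ) : Monotone (wBt m) := by
  intro a b hab
  classical
  exact Nat.findGreatest_mono (fun t h => le_trans h hab) le_rfl

-- linear upper bound with slope m - wBt m y0, above y0
lemma wB_le_above (m y0 s : ℕ) (h : y0 ≤ s) :
    wB m s ≤ wB m y0 + (s - y0) * (m - wBt m y0) := by
  induction s with
  | zero => simp_all
  | succ n ih =>
    rcases Nat.lt_or_ge y0 (n+1) with h' | h'
    · have hn : y0 ≤ n := by omega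
      have := ih hn
      have hinc : wB m (n+1) = wB m n + (m - wBt m n) := wB_succ m n
      have hmono : m - wBt m n ≤ m - wBt m y0 := by
        have := wBt_mono m hn; omega
      have : wB m (n+1) ≤ wB m y0 + (n - y0) * (m - wBt m y0) + (m - wBt m y0) := by omega
      have harith : (n - y0) * (m - wBt m y0) + (m - wBt m y0) = (n + 1 - y0) * (m - wBt m y0) := by
        have : n + 1 - y0 = (n - y0) + 1 := by omega
        rw [this, add_mul, one_mul]
      omega
    · have : y0 = n + 1 := by omega
      subst this; simp

-- linear lower bound: if wBt m z ≤ u for all z in [s, y0), then increments ≥ m - u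
lemma wB_ge_below (m u s y0 : ℕ) (h : s ≤ y0) (hu : ∀ z, s ≤ z → z < y0 → wBt m z ≤ u) :
    wB m s + (y0 - s) * (m - u) ≤ wB m y0 := by
  induction y0 with
  | zero => simp_all
  | succ n ih =>
    rcases Nat.lt_or_ge s (n+1) with h' | h'
    · have hn : s ≤ n := by omega
      have ihh := ih hn (fun z hz1 hz2 => hu z hz1 (by omega))
      have hinc : wB m (n+1) = wB m n + (m - wBt m n) := wB_succ m n
      have hlast : m - u ≤ m - wBt m n := by
        have := hu n hn (by omega); omega
      have harith : (n + 1 - s) * (m - u) ≤ (n - s) * (m - u) + (m - u) := by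
        have : n + 1 - s = (n - s) + 1 := by omega
        rw [this, add_mul, one_mul]
      omega
    · have : s = n + 1 := by omega
      subst this; simp

lemma wB_zero (m : ℕ) : wB m 0 = 0 := by
  have h1 : wBt m 0 = 0 := by
    by_contra hc
    have h3 : 1 ≤ wBt m 0 := Nat.pos_of_ne_zero hc
    have h4 := binPartial_mono m h3
    have h5 := binPartial_wBt_le m 0
    simp only [binPartial, Finset.sum_range_one, Nat.choose_zero_right] at h4
    simp only [binPartial] at h5
    omega
  simp [wB, h1, binPartial]

lemma binPartial_full (m : ℕ) : binPartial m (m + 1) = 2 ^ m := by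
  simpa [binPartial] using Nat.sum_range_choose m

lemma card_filter_card_lt (m t : ℕ) :
    (Finset.univ.filter fun B : Finset (Fin m) => B.card < t).card = binPartial m t := by
  classical
  induction t with
  | zero => simp [binPartial]
  | succ n ih =>
    have hsplit : (Finset.univ.filter fun B : Finset (Fin m) => B.card < n + 1)
        = (Finset.univ.filter fun B : Finset (Fin m) => B.card < n)
          ∪ (Finset.univ.filter fun B : Finset (Fin m) => B.card = n) := by
      ext B
      simp only [Finset.mem_filter, Finset.mem_union, Finset.mem_univ, true_and]
      omega
    have hdisj : Disjoint (Finset.univ.filter fun B : Finset (Fin m) => B.card < n)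
        (Finset.univ.filter fun B : Finset (Fin m) => B.card = n) := by
      rw [Finset.disjoint_filter]
      intro B _ h1 h2
      omega
    have hpc : (Finset.univ.filter fun B : Finset (Fin m) => B.card = n)
        = Finset.powersetCard n (Finset.univ : Finset (Fin m)) := by
      rw [Finset.powersetCard_eq_filter, Finset.powerset_univ]
    rw [hsplit, Finset.card_union_of_disjoint hdisj, ih, hpc, Finset.card_powersetCard,
      Finset.card_univ, Fintype.card_fin, binPartial_succ]

lemma card_filter_card_ge (m t : ℕ) (ht : t ≤ m) :
    (Finset.univ.filter fun B : Finset (Fin m) => m - t + 1 ≤ B.card).card = binPartial m t := by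
  classical
  rw [← card_filter_card_lt m t]
  apply Finset.card_bij' (fun B _ => Bᶜ) (fun B _ => Bᶜ)
  · intro B _; simp
  · intro B _; simp
  · intro B hB
    simp only [Finset.mem_filter, Finset.mem_univ, true_and] at hB ⊢
    rw [Finset.card_compl, Fintype.card_fin]
    have h2 : B.card ≤ m := by
      simpa [Fintype.card_fin] using Finset.card_le_univ B
    omega
  · intro B hB
    simp only [Finset.mem_filter, Finset.mem_univ, true_and] at hB ⊢
    rw [Finset.card_compl, Fintype.card_fin]
    have h2 : B.card ≤ m := by
      simpa [Fintype.card_fin] using Finset.card_le_univ B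
    omega

lemma sum_card_le_wB_aux (m n : ℕ) :
    ∀ F : Finset (Finset (Fin m)), F.card = n → ∑ A ∈ F, A.card ≤ wB m n := by
  classical
  induction n with
  | zero =>
    intro F hF
    rw [Finset.card_eq_zero] at hF
    simp [hF, wB_zero]
  | succ n ih =>
    intro F hF
    have hFne : F.Nonempty := by
      rw [← Finset.card_pos, hF]; omega
    obtain ⟨A, hA, hmin⟩ := F.exists_min_image Finset.card hFne
    have hF' : (F.erase A).card = n := by
      rw [Finset.card_erase_of_mem hA, hF]
      omega
    have ihh := ih (F.erase A) hF'
    have hcard2m : n + 1 ≤ 2 ^ m := by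
      calc n + 1 = F.card := hF.symm
        _ ≤ Fintype.card (Finset (Fin m)) := Finset.card_le_univ F
        _ = 2 ^ m := by rw [Fintype.card_finset, Fintype.card_fin]
    have htm : wBt m n ≤ m := by
      have : n < binPartial m (m + 1) := by rw [binPartial_full]; omega
      have := wBt_lt m n (m + 1) this
      omega
    have hAle : A.card ≤ m - wBt m n := by
      by_contra hc
      push_neg at hc
      have hsub : F ⊆ Finset.univ.filter fun B : Finset (Fin m) => m - wBt m n + 1 ≤ B.card := by
        intro B hB
        simp only [Finset.mem_filter, Finset.mem_univ, true_and]
        have := hmin B hB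
        omega
      have := Finset.card_le_card hsub
      rw [card_filter_card_ge m _ htm, hF] at this
      have := binPartial_wBt_le m n
      omega
    calc ∑ A ∈ F, A.card = ∑ B ∈ F.erase A, B.card + A.card :=
          (Finset.sum_erase_add F _ hA).symm
      _ ≤ wB m n + (m - wBt m n) := by omega
      _ = wB m (n + 1) := (wB_succ m n).symm

lemma sum_card_le_wB (m : ℕ) (F : Finset (Finset (Fin m))) :
    ∑ A ∈ F, A.card ≤ wB m F.card :=
  sum_card_le_wB_aux m F.card F rfl


section GraphLemmas

variable {m1 n1 m2 n2 : ℕ} {P : Set (Set (MPV m1 n1 m2 n2))}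

noncomputable def thePart (hreg : IsRegularPartition P) (v : MPV m1 n1 m2 n2) : ↥P :=
  ⟨((hreg.1.2 v).exists).choose, ((hreg.1.2 v).exists).choose_spec.1⟩

lemma thePart_mem (hreg : IsRegularPartition P) (v : MPV m1 n1 m2 n2) :
    v ∈ (thePart hreg v).1 :=
  ((hreg.1.2 v).exists).choose_spec.2

lemma thePart_unique (hreg : IsRegularPartition P) (v : MPV m1 n1 m2 n2) (p : ↥P)
    (hv : v ∈ p.1) : p = thePart hreg v := by
  obtain ⟨b, hb, hun⟩ := hreg.1.2 v
  have h1 : p.1 = b := hun p.1 ⟨p.2, hv⟩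
  have h2 : (thePart hreg v).1 = b := hun _ ⟨(thePart hreg v).2, thePart_mem hreg v⟩
  exact Subtype.ext (h1.trans h2.symm)

lemma inc'_iff (p : ↥P) (e : Fin m1) :
    tauInc' P p e ↔ ∃ x : Fin n1, (Sum.inl (e, x) : MPV m1 n1 m2 n2) ∈ p.1 := by
  constructor
  · rintro ⟨v, hv, hpart⟩
    rcases v with ⟨a, x⟩ | ⟨b, y⟩
    · simp only [partOf, Sum.map_inl] at hpart
      obtain rfl : a = e := by injection hpart
      exact ⟨x, hv⟩
    · simp [partOf] at hpart
  · rintro ⟨x, hx⟩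
    exact ⟨Sum.inl (e, x), hx, rfl⟩

lemma label_iff (p : ↥P) (i : Fin m2) :
    i ∈ labelOf P p ↔ ∃ x : Fin n2, (Sum.inr (i, x) : MPV m1 n1 m2 n2) ∈ p.1 := by
  constructor
  · rintro ⟨v, hv, hpart⟩
    rcases v with ⟨a, x⟩ | ⟨b, y⟩
    · simp [partOf] at hpart
    · simp only [partOf, Sum.map_inr] at hpart
      obtain rfl : b = i := by injection hpart
      exact ⟨y, hv⟩
  · rintro ⟨x, hx⟩
    exact ⟨Sum.inr (i, x), hx, rfl⟩

lemma ncard_incSet (hreg : IsRegularPartition P) (e : Fin m1) :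
    {p : ↥P | tauInc' P p e}.ncard = n1 := by
  classical
  set f : Fin n1 → ↥P := fun x => thePart hreg (Sum.inl (e, x)) with hf
  have hinj : Function.Injective f := by
    intro x y hxy
    have hx : (Sum.inl (e, x) : MPV m1 n1 m2 n2) ∈ (f x).1 := thePart_mem hreg _
    have hy : (Sum.inl (e, y) : MPV m1 n1 m2 n2) ∈ (f x).1 := by
      rw [hxy]; exact thePart_mem hreg _
    have hsub := hreg.2 (f x).1 (f x).2 (Sum.inl e)
    have := hsub ⟨hx, rfl⟩ ⟨hy, rfl⟩
    have : (e, x) = (e, y) := by injection this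
    have : x = y := by injection this
    exact Fin.ext (congrArg Fin.val this)
  have hrange : {p : ↥P | tauInc' P p e} = Set.range f := by
    ext p
    simp only [Set.mem_setOf_eq, Set.mem_range]
    rw [inc'_iff]
    constructor
    · rintro ⟨x, hx⟩
      exact ⟨x, (thePart_unique hreg _ p hx).symm⟩
    · rintro ⟨x, rfl⟩
      exact ⟨x, thePart_mem hreg _⟩
  rw [hrange, ← Set.image_univ, Set.ncard_image_of_injective _ hinj, Set.ncard_univ]
  simp

lemma incTG_adj_inl (p : ↥P) (y : ↥P ⊕ Fin m1) :
    (incTG P).Adj (Sum.inl p) y ↔ ∃ e, y = Sum.inr e ∧ tauInc' P p e := by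
  rw [incTG, SimpleGraph.fromRel_adj]
  constructor
  · rintro ⟨hne, ⟨p', j, h1, h2, h3⟩ | ⟨p', j, h1, h2, h3⟩⟩
    · obtain rfl : p = p' := by injection h1
      exact ⟨j, h2, h3⟩
    · exact (Sum.inl_ne_inr h2).elim
  · rintro ⟨e, rfl, he⟩
    exact ⟨by simp, Or.inl ⟨p, e, rfl, rfl, he⟩⟩

lemma incTG_adj_inr (e : Fin m1) (y : ↥P ⊕ Fin m1) :
    (incTG P).Adj (Sum.inr e) y ↔ ∃ p, y = Sum.inl p ∧ tauInc' P p e := by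
  rw [incTG, SimpleGraph.fromRel_adj]
  constructor
  · rintro ⟨hne, ⟨p', j, h1, h2, h3⟩ | ⟨p', j, h1, h2, h3⟩⟩
    · exact (Sum.inr_ne_inl h1).elim
    · obtain rfl : e = j := by injection h2
      exact ⟨p', h1, h3⟩
  · rintro ⟨p, rfl, hp⟩
    exact ⟨by simp, Or.inr ⟨p, e, rfl, rfl, hp⟩⟩

lemma mem_compE_of {c : (incTG P).ConnectedComponent} {p : ↥P} {e : Fin m1}
    (hp : p ∈ compV P c) (he : tauInc' P p e) : e ∈ compE P c := by
  have hadj : (incTG P).Adj (Sum.inl p) (Sum.inr e) :=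
    (incTG_adj_inl p _).2 ⟨e, rfl, he⟩
  have : (incTG P).connectedComponentMk (Sum.inr e)
      = (incTG P).connectedComponentMk (Sum.inl p) :=
    SimpleGraph.ConnectedComponent.eq.2 hadj.symm.reachable
  exact this.trans hp

lemma mem_compV_of {c : (incTG P).ConnectedComponent} {p : ↥P} {e : Fin m1}
    (he : e ∈ compE P c) (hinc : tauInc' P p e) : p ∈ compV P c := by
  have hadj : (incTG P).Adj (Sum.inl p) (Sum.inr e) :=
    (incTG_adj_inl p _).2 ⟨e, rfl, hinc⟩
  have : (incTG P).connectedComponentMk (Sum.inl p)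
      = (incTG P).connectedComponentMk (Sum.inr e) :=
    SimpleGraph.ConnectedComponent.eq.2 hadj.reachable
  exact this.trans he

lemma degE_pos {c : (incTG P).ConnectedComponent} (hne : (compE P c).Nonempty)
    {p : ↥P} (hp : p ∈ compV P c) : 1 ≤ degE P p := by
  obtain ⟨e0, he0⟩ := hne
  have hreach : (incTG P).Reachable (Sum.inl p) (Sum.inr e0) :=
    SimpleGraph.ConnectedComponent.eq.1 (hp.trans he0.symm)
  obtain ⟨w⟩ := hreach
  cases w with
  | cons h w' =>
    rename_i y
    obtain ⟨e, _, he⟩ := (incTG_adj_inl p y).1 h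
    have hne' : {j : Fin m1 | tauInc' P p j}.Nonempty := ⟨e, he⟩
    have hpos := (Set.ncard_pos (s := {j : Fin m1 | tauInc' P p j}) (Set.toFinite _)).2 hne'
    rw [degE]
    omega

lemma degE_one_inc {p : ↥P} {e : Fin m1} (h1 : degE P p = 1) (he : tauInc' P p e)
    (e' : Fin m1) : tauInc' P p e' ↔ e' = e := by
  rw [degE, Set.ncard_eq_one] at h1
  obtain ⟨a, ha⟩ := h1
  have hea : e = a := by
    have : e ∈ {j : Fin m1 | tauInc' P p j} := he
    rw [ha] at this; exact this
  constructor
  · intro h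
    have : e' ∈ {j : Fin m1 | tauInc' P p j} := h
    rw [ha] at this
    simp only [Set.mem_singleton_iff] at this
    omega
  · rintro rfl; exact he

lemma labels_injOn (hasym : HypAsymmetric (tauInc P)) (e : Fin m1) :
    Set.InjOn (labelOf P) {p : ↥P | tauInc' P p e ∧ degE P p = 1} := by
  classical
  intro p hp q hq hl
  by_contra hne
  have hpres : ∀ (v : ↥P) (i : Fin m1 ⊕ Fin m2),
      tauInc P v i ↔ tauInc P ((Equiv.swap p q) v) ((1 : Equiv.Perm (Fin m1 ⊕ Fin m2)) i) := by
    intro v i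
    simp only [Equiv.Perm.one_apply]
    rcases eq_or_ne v p with rfl | hvp
    · rw [Equiv.swap_apply_left]
      cases i with
      | inl e' =>
        have h1 := degE_one_inc hp.2 hp.1 e'
        have h2 := degE_one_inc hq.2 hq.1 e'
        show tauInc' P v e' ↔ tauInc' P q e'
        rw [h1, h2]
      | inr i' =>
        show i' ∈ labelOf P v ↔ i' ∈ labelOf P q
        rw [hl]
    · rcases eq_or_ne v q with rfl | hvq
      · rw [Equiv.swap_apply_right]
        cases i with
        | inl e' =>
          have h1 := degE_one_inc hp.2 hp.1 e'
          have h2 := degE_one_inc hq.2 hq.1 e'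
          show tauInc' P v e' ↔ tauInc' P p e'
          rw [h1, h2]
        | inr i' =>
          show i' ∈ labelOf P v ↔ i' ∈ labelOf P p
          rw [hl]
      · rw [Equiv.swap_apply_of_ne_of_ne hvp hvq]
  have hid := (hasym (Equiv.swap p q) 1 hpres).1
  have : q = p := by
    have happ := congrArg (fun σ : Equiv.Perm ↥P => σ p) hid
    simpa [Equiv.swap_apply_left] using happ
  exact hne this.symm

lemma wSE_le_wB (hasym : HypAsymmetric (tauInc P)) (e : Fin m1) :
    wSE P e ≤ wB m2 (deg1E P e) := by
  classical
  have hDfin : ({p : ↥P | tauInc' P p e ∧ degE P p = 1}).Finite := Set.toFinite _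
  have h1 : wSE P e = ∑ p ∈ hDfin.toFinset, wtv P p := by
    rw [wSE, finsum_mem_finite _ hDfin]
  set g : ↥P → Finset (Fin m2) := fun p => (Set.toFinite (labelOf P p)).toFinset with hg
  have hginj : ∀ a ∈ hDfin.toFinset, ∀ b ∈ hDfin.toFinset, g a = g b → a = b := by
    intro a ha b hb hab
    apply labels_injOn hasym e (hDfin.mem_toFinset.1 ha) (hDfin.mem_toFinset.1 hb)
    calc labelOf P a = ((g a : Finset (Fin m2)) : Set (Fin m2)) :=
          (Set.Finite.coe_toFinset _).symm
      _ = ((g b : Finset (Fin m2)) : Set (Fin m2)) := by rw [hab]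
      _ = labelOf P b := Set.Finite.coe_toFinset _
  have h2 : ∑ p ∈ hDfin.toFinset, wtv P p = ∑ A ∈ hDfin.toFinset.image g, A.card := by
    rw [Finset.sum_image hginj]
    refine Finset.sum_congr rfl ?_
    intro x _
    rw [wtv, Set.ncard_eq_toFinset_card _ (Set.toFinite _)]
  have h3 : (hDfin.toFinset.image g).card = deg1E P e := by
    rw [Finset.card_image_of_injOn (fun a ha b hb hab => hginj a ha b hb hab),
      deg1E, Set.ncard_eq_toFinset_card _ hDfin]
  rw [h1, h2, ← h3]
  exact sum_card_le_wB m2 _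

lemma wtv_le (p : ↥P) : wtv P p ≤ m2 := by
  have h := Set.ncard_le_ncard (Set.subset_univ (labelOf P p)) (Set.toFinite _)
  simpa [wtv, Set.ncard_univ] using h

noncomputable def Vfin (P : Set (Set (MPV m1 n1 m2 n2))) (c : (incTG P).ConnectedComponent) :
    Finset ↥P := (Set.toFinite (compV P c)).toFinset

noncomputable def Efin (P : Set (Set (MPV m1 n1 m2 n2))) (c : (incTG P).ConnectedComponent) :
    Finset (Fin m1) := (Set.toFinite (compE P c)).toFinset

lemma mem_Vfin {c : (incTG P).ConnectedComponent} {p : ↥P} :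
    p ∈ Vfin P c ↔ p ∈ compV P c := Set.Finite.mem_toFinset _

lemma mem_Efin {c : (incTG P).ConnectedComponent} {e : Fin m1} :
    e ∈ Efin P c ↔ e ∈ compE P c := Set.Finite.mem_toFinset _

open Classical in
lemma degE_eq_card {c : (incTG P).ConnectedComponent} {p : ↥P} (hp : p ∈ compV P c) :
    ((Efin P c).filter (fun e => tauInc' P p e)).card = degE P p := by
  rw [degE, Set.ncard_eq_toFinset_card _ (Set.toFinite _)]
  congr 1
  ext e
  simp only [Finset.mem_filter, Set.Finite.mem_toFinset, Set.mem_setOf_eq, mem_Efin]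
  exact ⟨fun h => h.2, fun h => ⟨mem_compE_of hp h, h⟩⟩

open Classical in
lemma double_count (c : (incTG P).ConnectedComponent) (f : ↥P → ℕ) (A : Finset ↥P)
    (hA : ∀ p ∈ A, p ∈ compV P c) :
    ∑ e ∈ Efin P c, ∑ p ∈ A.filter (fun p => tauInc' P p e), f p
      = ∑ p ∈ A, f p * degE P p := by
  have h1 : ∀ e, ∑ p ∈ A.filter (fun p => tauInc' P p e), f p
      = ∑ p ∈ A, if tauInc' P p e then f p else 0 := fun e => Finset.sum_filter _ _
  rw [Finset.sum_congr rfl (fun e _ => h1 e), Finset.sum_comm]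
  refine Finset.sum_congr rfl ?_
  intro p hp
  rw [← Finset.sum_filter, Finset.sum_const, smul_eq_mul, degE_eq_card (hA p hp), mul_comm]

open Classical in
lemma incident_filter_card (hreg : IsRegularPartition P) {c : (incTG P).ConnectedComponent}
    {e : Fin m1} (he : e ∈ compE P c) :
    ((Vfin P c).filter (fun p => tauInc' P p e)).card = n1 := by
  have hset : (Vfin P c).filter (fun p => tauInc' P p e)
      = (Set.toFinite {p : ↥P | tauInc' P p e}).toFinset := by
    ext p
    simp only [Finset.mem_filter, Set.Finite.mem_toFinset, Set.mem_setOf_eq, mem_Vfin]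
    exact ⟨fun h => h.2, fun h => ⟨mem_compV_of he h, h⟩⟩
  rw [hset, ← Set.ncard_eq_toFinset_card _ (Set.toFinite _), ncard_incSet hreg]

open Classical in
lemma sum_degE (hreg : IsRegularPartition P) (c : (incTG P).ConnectedComponent) :
    ∑ p ∈ Vfin P c, degE P p = n1 * (Efin P c).card := by
  have h := double_count c (fun _ => 1) (Vfin P c) (fun p hp => mem_Vfin.1 hp)
  simp only [one_mul] at h
  rw [← h]
  rw [Finset.sum_congr rfl (fun e he => by
    rw [← Finset.card_eq_sum_ones, incident_filter_card hreg (mem_Efin.1 he)]),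
    Finset.sum_const, smul_eq_mul, mul_comm]

open Classical in
lemma deg1_filter_eq {c : (incTG P).ConnectedComponent} {e : Fin m1} (he : e ∈ compE P c) :
    (((Vfin P c).filter (fun p => degE P p = 1)).filter (fun p => tauInc' P p e))
      = (Set.toFinite {p : ↥P | tauInc' P p e ∧ degE P p = 1}).toFinset := by
  ext p
  simp only [Finset.mem_filter, Set.Finite.mem_toFinset, Set.mem_setOf_eq, mem_Vfin]
  constructor
  · rintro ⟨⟨_, h1⟩, h2⟩; exact ⟨h2, h1⟩
  · rintro ⟨h1, h2⟩; exact ⟨⟨mem_compV_of he h1, h2⟩, h1⟩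

open Classical in
lemma sum_deg1E (c : (incTG P).ConnectedComponent) :
    ∑ e ∈ Efin P c, deg1E P e = ((Vfin P c).filter (fun p => degE P p = 1)).card := by
  have h := double_count c (fun _ => 1) ((Vfin P c).filter (fun p => degE P p = 1))
    (fun p hp => mem_Vfin.1 (Finset.mem_filter.1 hp).1)
  simp only [one_mul] at h
  have h2 : ∀ e ∈ Efin P c, deg1E P e
      = ∑ p ∈ (((Vfin P c).filter (fun p => degE P p = 1)).filter (fun p => tauInc' P p e)),
        (1 : ℕ) := by
    intro e he
    rw [← Finset.card_eq_sum_ones, deg1_filter_eq (mem_Efin.1 he),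
      ← Set.ncard_eq_toFinset_card _ (Set.toFinite _), deg1E]
  rw [Finset.sum_congr rfl h2, h]
  rw [Finset.sum_congr rfl (fun p hp => (Finset.mem_filter.1 hp).2), Finset.card_eq_sum_ones]

open Classical in
lemma sum_wSE (c : (incTG P).ConnectedComponent) :
    ∑ e ∈ Efin P c, wSE P e
      = ∑ p ∈ (Vfin P c).filter (fun p => degE P p = 1), wtv P p := by
  have h := double_count c (wtv P) ((Vfin P c).filter (fun p => degE P p = 1))
    (fun p hp => mem_Vfin.1 (Finset.mem_filter.1 hp).1)
  have h2 : ∀ e ∈ Efin P c, wSE P e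
      = ∑ p ∈ (((Vfin P c).filter (fun p => degE P p = 1)).filter (fun p => tauInc' P p e)),
        wtv P p := by
    intro e he
    rw [deg1_filter_eq (mem_Efin.1 he), wSE, finsum_mem_finite _ (Set.toFinite _)]
  rw [Finset.sum_congr rfl h2, h]
  refine Finset.sum_congr rfl ?_
  intro p hp
  rw [(Finset.mem_filter.1 hp).2, mul_one]

open Classical in
lemma wComp_eq_split (c : (incTG P).ConnectedComponent) :
    wComp P c = (∑ p ∈ (Vfin P c).filter (fun p => degE P p = 1), wtv P p)
      + ∑ p ∈ (Vfin P c).filter (fun p => ¬ degE P p = 1), wtv P p := by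
  rw [wComp, finsum_mem_finite _ (Set.toFinite _)]
  exact (Finset.sum_filter_add_sum_filter_not (Vfin P c) (fun p => degE P p = 1) _).symm

open Classical in
lemma V2_toFinset (hne : (compE P c).Nonempty) :
    (Set.toFinite {p ∈ compV P c | 2 ≤ degE P p}).toFinset
      = (Vfin P c).filter (fun p => ¬ degE P p = 1) := by
  ext p
  simp only [Finset.mem_filter, Set.Finite.mem_toFinset, Set.mem_setOf_eq, mem_Vfin]
  constructor
  · rintro ⟨h1, h2⟩; exact ⟨h1, by omega⟩
  · rintro ⟨h1, h2⟩
    have := degE_pos hne h1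
    exact ⟨h1, by omega⟩

open Classical in
lemma dComp_eq_split (hne : (compE P c).Nonempty) :
    dComp P c = (∑ p ∈ (Vfin P c).filter (fun p => ¬ degE P p = 1), (m2 - wtv P p))
      + ∑ e ∈ Efin P c, (wB m2 (deg1E P e) - wSE P e) := by
  rw [dComp, finsum_mem_finite _ (Set.toFinite _), finsum_mem_finite _ (Set.toFinite _),
    V2_toFinset hne]
  rfl

lemma deg1E_le (hreg : IsRegularPartition P) (e : Fin m1) : deg1E P e ≤ n1 := by
  have h := Set.ncard_le_ncard
    (show {p : ↥P | tauInc' P p e ∧ degE P p = 1} ⊆ {p : ↥P | tauInc' P p e} from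
      fun p hp => hp.1) (Set.toFinite _)
  rw [ncard_incSet hreg] at h
  exact h

open Classical in
set_option maxHeartbeats 1000000 in
lemma conn_bound (hreg : IsRegularPartition P) (c : (incTG P).ConnectedComponent)
    (hne : (compE P c).Nonempty) :
    (compV P c).ncard + (compE P c).ncard ≤ n1 * (compE P c).ncard + 1 := by
  classical
  obtain ⟨e0, he0⟩ := hne
  set r : ↥P ⊕ Fin m1 := Sum.inr e0 with hr
  set C : Set (↥P ⊕ Fin m1) := {x | (incTG P).connectedComponentMk x = c} with hC
  have hrC : r ∈ C := by
    show (incTG P).connectedComponentMk (Sum.inr e0) = c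
    exact he0
  have hCcard : C.ncard = (compV P c).ncard + (compE P c).ncard := by
    have hsplit : C = Sum.inl '' compV P c ∪ Sum.inr '' compE P c := by
      ext x
      cases x with
      | inl p =>
        simp only [hC, Set.mem_setOf_eq, Set.mem_union, Set.mem_image]
        constructor
        · intro h; exact Or.inl ⟨p, h, rfl⟩
        · rintro (⟨p', hp', h⟩ | ⟨e', _, h⟩)
          · obtain rfl : p' = p := by injection h
            exact hp'
          · exact (Sum.inr_ne_inl h).elim
      | inr e =>
        simp only [hC, Set.mem_setOf_eq, Set.mem_union, Set.mem_image]
        constructor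
        · intro h; exact Or.inr ⟨e, h, rfl⟩
        · rintro (⟨p', _, h⟩ | ⟨e', he', h⟩)
          · exact (Sum.inl_ne_inr h).elim
          · obtain rfl : e' = e := by injection h
            exact he'
    rw [hsplit, Set.ncard_union_eq (by
        rw [Set.disjoint_left]
        rintro x ⟨p, _, rfl⟩ ⟨e, _, h⟩
        exact Sum.inl_ne_inr h.symm) (Set.toFinite _) (Set.toFinite _),
      Set.ncard_image_of_injective _ Sum.inl_injective,
      Set.ncard_image_of_injective _ Sum.inr_injective]
  set PFs : Set (↥P × Fin m1) :=
    {z | tauInc' P z.1 z.2 ∧ z.1 ∈ compV P c ∧ z.2 ∈ compE P c} with hPFs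
  have hPFcard : PFs.ncard = n1 * (compE P c).ncard := by
    have hcoe : PFs = ↑((Vfin P c ×ˢ Efin P c).filter (fun z => tauInc' P z.1 z.2)) := by
      ext z
      simp only [hPFs, Set.mem_setOf_eq, Finset.coe_filter, Finset.mem_product, mem_Vfin,
        mem_Efin]
      tauto
    rw [hcoe, Set.ncard_coe_finset]
    calc ((Vfin P c ×ˢ Efin P c).filter (fun z => tauInc' P z.1 z.2)).card
        = ∑ z ∈ Vfin P c ×ˢ Efin P c, if tauInc' P z.1 z.2 then 1 else 0 :=
          Finset.card_filter _ _
      _ = ∑ p ∈ Vfin P c, ∑ e ∈ Efin P c, if tauInc' P p e then 1 else 0 :=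
          by rw [Finset.sum_product]
      _ = ∑ e ∈ Efin P c, ∑ p ∈ Vfin P c, if tauInc' P p e then 1 else 0 :=
          Finset.sum_comm
      _ = ∑ e ∈ Efin P c, ((Vfin P c).filter (fun p => tauInc' P p e)).card :=
          Finset.sum_congr rfl (fun e _ => (Finset.card_filter _ _).symm)
      _ = ∑ e ∈ Efin P c, n1 :=
          Finset.sum_congr rfl (fun e he => incident_filter_card hreg (mem_Efin.1 he))
      _ = (Efin P c).card * n1 := Finset.sum_const _
      _ = n1 * (compE P c).ncard := by
          rw [mul_comm, Set.ncard_eq_toFinset_card _ (Set.toFinite _)]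
          rfl
  have hstep : ∀ x, x ∈ C → x ≠ r → ∃ pe : ↥P × Fin m1,
      (tauInc' P pe.1 pe.2 ∧ pe.1 ∈ compV P c ∧ pe.2 ∈ compE P c) ∧
      ((x = Sum.inl pe.1 ∧ (incTG P).dist (Sum.inr pe.2) r < (incTG P).dist x r) ∨
       (x = Sum.inr pe.2 ∧ (incTG P).dist (Sum.inl pe.1) r < (incTG P).dist x r)) := by
    intro x hx hxr
    have hreach : (incTG P).Reachable x r := SimpleGraph.ConnectedComponent.eq.1 (hx.trans hrC.symm)
    obtain ⟨w, hw⟩ := hreach.exists_walk_length_eq_dist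
    cases w with
    | nil => exact absurd rfl hxr
    | cons hadj w' =>
      rename_i y
      have hylen : (incTG P).dist y r ≤ w'.length := SimpleGraph.dist_le w'
      have hylt : (incTG P).dist y r < (incTG P).dist x r := by
        have hlen : w'.length + 1 = (incTG P).dist x r := by simpa using hw
        omega
      cases x with
      | inl p =>
        obtain ⟨e, rfl, hinc⟩ := (incTG_adj_inl p y).1 hadj
        exact ⟨(p, e), ⟨hinc, hx, mem_compE_of hx hinc⟩, Or.inl ⟨rfl, hylt⟩⟩
      | inr e =>
        obtain ⟨p, rfl, hinc⟩ := (incTG_adj_inr e y).1 hadj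
        exact ⟨(p, e), ⟨hinc, mem_compV_of hx hinc, hx⟩, Or.inr ⟨rfl, hylt⟩⟩
  have hdiff : ∀ x : ↥(C \ {r}), x.1 ∈ C ∧ x.1 ≠ r := by
    rintro ⟨x, hx⟩
    exact ⟨hx.1, fun h => hx.2 (Set.mem_singleton_iff.2 h)⟩
  choose F hF1 hF2 using fun x : ↥(C \ {r}) => hstep x.1 (hdiff x).1 (hdiff x).2
  set f : ↥(C \ {r}) → ↥PFs := fun x => ⟨F x, hF1 x⟩ with hf
  have hinj : Function.Injective f := by
    intro a b hab
    have hval : F a = F b := congrArg Subtype.val hab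
    have h4a := hF2 a
    have h4b := hF2 b
    rw [hval] at h4a
    apply Subtype.ext
    rcases h4a with ⟨ha1, ha2⟩ | ⟨ha1, ha2⟩ <;> rcases h4b with ⟨hb1, hb2⟩ | ⟨hb1, hb2⟩
    · exact ha1.trans hb1.symm
    · rw [ha1] at ha2
      rw [hb1] at hb2
      omega
    · rw [ha1] at ha2
      rw [hb1] at hb2
      omega
    · exact ha1.trans hb1.symm
  have hcard_le : (C \ {r}).ncard ≤ PFs.ncard := by
    rw [← Nat.card_coe_set_eq, ← Nat.card_coe_set_eq]
    exact Nat.card_le_card_of_injective f hinj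
  have hdiffcard : (C \ {r}).ncard = C.ncard - 1 := Set.ncard_diff_singleton_of_mem hrC
  have hCpos : 1 ≤ C.ncard := by
    have := Set.ncard_pos (s := C) (Set.toFinite _)
    exact this.2 ⟨r, hrC⟩
  omega

end GraphLemmas


section Main

lemma wBt_closed (m t k : ℕ) (ht : t ≤ m) (hk : k < Nat.choose m t) :
    wBt m (binPartial m t + k) = t := by
  have h1 : t ≤ wBt m (binPartial m t + k) := wBt_ge m _ t (by omega) (by omega)
  have h2 : wBt m (binPartial m t + k) < t + 1 :=
    wBt_lt m _ (t+1) (by rw [binPartial_succ]; omega)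
  omega

lemma wB_closed (m t k : ℕ) (ht : t ≤ m) (hk : k < Nat.choose m t) :
    wB m (binPartial m t + k)
      = (∑ i ∈ Finset.range t, (m - i) * Nat.choose m i) + k * (m - t) := by
  rw [wB, wBt_closed m t k ht hk, Nat.add_sub_cancel_left]

lemma wB_le_above' (m y0 s : ℕ) (h : y0 ≤ s) (htm : wBt m y0 ≤ m) :
    (wB m s : ℤ) ≤ wB m y0 + ((s:ℤ) - y0) * ((m:ℤ) - wBt m y0) := by
  have h2 := wB_le_above m y0 s h
  zify [htm, h] at h2
  linarith

lemma wB_ge_below' (m u s y0 : ℕ) (h : s ≤ y0) (hu : ∀ z, s ≤ z → z < y0 → wBt m z ≤ u)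
    (hum : u ≤ m) :
    (wB m s : ℤ) + ((y0:ℤ) - s) * ((m:ℤ) - u) ≤ wB m y0 := by
  have h2 := wB_ge_below m u s y0 h hu
  zify [h, hum] at h2
  linarith

end Main

set_option maxHeartbeats 2000000 in
/-- **Corollary 4.6.** Let `j = j_{n1,m2}` (an integer `≥ -1`), `k = k_{n1,m2}` and
`r = r_{n1,m2}`, and let `G` be a connected component of `τ'(P)` with at least one edge,
where `τ(P)` is asymmetric.  Then:
(1) if `j = ⌊(m2-1)/2⌋` then `w(G) ≤ m2·r·|E(G)|`;
(2) if `j < ⌊(m2-1)/2⌋` and `p ≤ |E(G)|(n1/2 - 1)` then `w(G) ≤ m2·r·|E(G)|`;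
(3) if `G` has positive value `v(G) = w(G) - r·m2·|E(G)| > 0`, then
`j < ⌊(m2-1)/2⌋`, `G` is a tree, and `v(G) ≤ m2 - 2j - d(G)`. -/
theorem component_value_bound
    (m1 n1 m2 n2 : ℕ) (hn1 : 2 ≤ n1) (hm2 : 1 ≤ m2)
    (j : ℤ) (k : ℕ) (r : ℝ)
    (hj : -1 ≤ j)
    (hjk : (n1 : ℤ) = 2 + (∑ i ∈ Finset.range (j + 1).toNat, (Nat.choose m2 i : ℤ)) + k)
    (hcond : (j < (((m2 - 1) / 2 : ℕ) : ℤ) ∧ (k : ℤ) < Nat.choose m2 (j + 1).toNat)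
      ∨ j = (((m2 - 1) / 2 : ℕ) : ℤ))
    (hr : r = 1 + (∑ i ∈ Finset.range (j + 1).toNat, ((m2 - i : ℝ) / m2) * Nat.choose m2 i)
      + (if j < (((m2 - 1) / 2 : ℕ) : ℤ) then (((m2 : ℝ) - j - 1) / m2) * k
          else (k : ℝ) / 2))
    (P : Set (Set (MPV m1 n1 m2 n2)))
    (hreg : IsRegularPartition P) (hasym : HypAsymmetric (tauInc P))
    (c : (incTG P).ConnectedComponent) (hne : (compE P c).Nonempty)
    (p : ℚ)
    (hp : ((compV P c).ncard : ℚ) = n1 * (compE P c).ncard / 2 + p) :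
    (j = (((m2 - 1) / 2 : ℕ) : ℤ) →
      (wComp P c : ℝ) ≤ m2 * r * (compE P c).ncard) ∧
    (j < (((m2 - 1) / 2 : ℕ) : ℤ) → p ≤ (compE P c).ncard * ((n1 : ℚ) / 2 - 1) →
      (wComp P c : ℝ) ≤ m2 * r * (compE P c).ncard) ∧
    (0 < (wComp P c : ℝ) - r * m2 * (compE P c).ncard →
      j < (((m2 - 1) / 2 : ℕ) : ℤ) ∧
      (compV P c).ncard = (n1 - 1) * (compE P c).ncard + 1 ∧
      (wComp P c : ℝ) - r * m2 * (compE P c).ncard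
        ≤ (m2 : ℝ) - 2 * j - dComp P c) := by
  classical
  set fl : ℕ := (m2 - 1) / 2 with hfl
  set jn : ℕ := (j + 1).toNat with hjndef
  have hjnz : (jn : ℤ) = j + 1 := Int.toNat_of_nonneg (by omega)
  have hbp_cast : ((binPartial m2 jn : ℕ) : ℤ)
      = ∑ i ∈ Finset.range jn, (Nat.choose m2 i : ℤ) := by
    rw [binPartial]; push_cast; rfl
  have hn1B : n1 = 2 + binPartial m2 jn + k := by
    rw [← hbp_cast] at hjk
    omega
  have hflm : 2 * fl ≤ m2 - 1 ∧ m2 - 1 ≤ 2 * fl + 1 := by omega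
  set q := (compE P c).ncard with hq
  set nV := (compV P c).ncard with hnVd
  have hq1 : 0 < q := by
    rw [hq]
    exact (Set.ncard_pos (Set.toFinite _)).2 hne
  have hEcard : (Efin P c).card = q := by
    rw [hq]
    exact (Set.ncard_eq_toFinset_card _ (Set.toFinite _)).symm
  have hVcard : (Vfin P c).card = nV := by
    rw [hnVd]
    exact (Set.ncard_eq_toFinset_card _ (Set.toFinite _)).symm
  set V1 := (Vfin P c).filter (fun p => degE P p = 1) with hV1d
  set V2 := (Vfin P c).filter (fun p => ¬ degE P p = 1) with hV2d
  set n2c := V2.card with hn2cd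
  set S := ∑ e ∈ Efin P c, deg1E P e with hSd
  set EWB := ∑ e ∈ Efin P c, wB m2 (deg1E P e) with hEWBd
  have hSV1 : S = V1.card := sum_deg1E c
  have hparts : V1.card + n2c = nV := by
    rw [← hVcard, hn2cd, hV1d, hV2d]
    exact Finset.card_filter_add_card_filter_not _
  have hdegsum : ∑ p ∈ Vfin P c, degE P p = n1 * q := by
    rw [sum_degE hreg, hEcard]
  set T := ∑ p ∈ V2, degE P p with hTd
  have hST : S + T = n1 * q := by
    have hsplitdeg : ∑ p ∈ Vfin P c, degE P p
        = (∑ p ∈ V1, degE P p) + ∑ p ∈ V2, degE P p :=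
      (Finset.sum_filter_add_sum_filter_not _ _ _).symm
    have hV1deg : ∑ p ∈ V1, degE P p = V1.card := by
      rw [Finset.card_eq_sum_ones]
      exact Finset.sum_congr rfl (fun p hp => (Finset.mem_filter.1 hp).2)
    omega
  have h2T : 2 * n2c ≤ T := by
    have : ∑ p ∈ V2, 2 ≤ T := Finset.sum_le_sum (fun p hp => by
      obtain ⟨hpV, hpne⟩ := Finset.mem_filter.1 hp
      have := degE_pos hne (mem_Vfin.1 hpV)
      omega)
    rw [Finset.sum_const, smul_eq_mul] at this
    omega
  have hwd : wComp P c + dComp P c = m2 * n2c + EWB := by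
    have hsplit := wComp_eq_split (P := P) c
    have hswse := sum_wSE (P := P) c
    have hdsplit := dComp_eq_split (P := P) hne
    rw [← hV2d] at hsplit hdsplit
    rw [← hV1d] at hsplit hswse
    have h1 : (∑ e ∈ Efin P c, wSE P e)
        + ∑ e ∈ Efin P c, (wB m2 (deg1E P e) - wSE P e) = EWB := by
      rw [← Finset.sum_add_distrib]
      exact Finset.sum_congr rfl (fun e _ => by
        have := wSE_le_wB hasym e
        omega)
    have h2 : (∑ p ∈ V2, wtv P p) + ∑ p ∈ V2, (m2 - wtv P p) = m2 * n2c := by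
      rw [← Finset.sum_add_distrib]
      have : ∀ p ∈ V2, wtv P p + (m2 - wtv P p) = m2 := fun p _ => by
        have := wtv_le (P := P) p
        omega
      rw [Finset.sum_congr rfl this, Finset.sum_const, smul_eq_mul, mul_comm]
    rw [hsplit, hdsplit, ← hswse]
    omega
  have hconn : nV + q ≤ n1 * q + 1 := by
    rw [hnVd, hq]
    exact conn_bound hreg c hne
  have hm2r : (0:ℝ) < m2 := by exact_mod_cast hm2
  have hScast : (S:ℤ) = ∑ e ∈ Efin P c, (deg1E P e : ℤ) := by
    rw [hSd]; exact Nat.cast_sum _ _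
  -- Part 1
  have part1 : j = ((fl : ℕ) : ℤ) → (wComp P c : ℝ) ≤ m2 * r * q := by
    intro hjf
    have hjn_fl : jn = fl + 1 := by omega
    have hjnm2 : jn ≤ m2 := by omega
    have hr' : r = 1 + (∑ i ∈ Finset.range jn, ((m2 - i : ℝ)/m2) * Nat.choose m2 i)
        + (k:ℝ)/2 := by
      rw [hr, if_neg (by omega : ¬ j < ((fl : ℕ) : ℤ))]
    set B := binPartial m2 jn with hBd
    set W := wB m2 B with hWd
    have hWclosed : W = ∑ i ∈ Finset.range jn, (m2 - i) * Nat.choose m2 i := by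
      rw [hWd, hBd, show binPartial m2 jn = binPartial m2 jn + 0 from rfl,
        wB_closed m2 jn 0 hjnm2 (Nat.choose_pos hjnm2)]
      simp
    have hWcast : (W:ℝ) = ∑ i ∈ Finset.range jn, ((m2:ℝ) - i) * Nat.choose m2 i := by
      rw [hWclosed]
      push_cast
      refine Finset.sum_congr rfl ?_
      intro i hi
      have : i ≤ m2 := le_trans (le_of_lt (Finset.mem_range.1 hi)) hjnm2
      rw [Nat.cast_sub this]
    have hm2rval : (m2:ℝ) * r = m2 + W + m2 * k / 2 := by
      rw [hr', hWcast, mul_add, mul_add, mul_one, Finset.mul_sum]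
      have hterm : ∀ i ∈ Finset.range jn,
          (m2:ℝ) * (((m2:ℝ) - i)/m2 * Nat.choose m2 i)
            = ((m2:ℝ) - i) * Nat.choose m2 i := by
        intro i _
        field_simp
      rw [Finset.sum_congr rfl hterm]
      ring
    have hwBtB : wBt m2 B = jn := by
      rw [hBd, show binPartial m2 jn = binPartial m2 jn + 0 from rfl]
      exact wBt_closed m2 jn 0 hjnm2 (Nat.choose_pos hjnm2)
    have hslope1 : ∀ s : ℕ, 2 * (wB m2 s : ℤ) ≤ 2 * W + ((s:ℤ) - B) * m2 := by
      intro s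
      rcases le_or_gt B s with hcs | hcs
      · have h1 := wB_le_above' m2 B s hcs (by omega)
        rw [hwBtB] at h1
        have hs0 : (0:ℤ) ≤ (s:ℤ) - B := by
          have := hcs; omega
        have hslp : 2 * ((m2:ℤ) - jn) ≤ m2 := by omega
        have hprod := mul_le_mul_of_nonneg_left hslp hs0
        linarith only [h1, hprod]
      · have hu : ∀ z, s ≤ z → z < B → wBt m2 z ≤ jn - 1 := by
          intro z _ hz
          have := wBt_lt m2 z jn (by rw [hBd] at hz; exact hz)
          omega
        have h1 := wB_ge_below' m2 (jn - 1) s B (le_of_lt hcs) hu (by omega)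
        have hs0 : (0:ℤ) ≤ (B:ℤ) - s := by omega
        have hslp : (m2:ℤ) ≤ 2 * ((m2:ℤ) - ((jn:ℕ) - 1 : ℕ)) := by
          have : ((jn - 1 : ℕ) : ℤ) = jn - 1 := by omega
          omega
        have hprod := mul_le_mul_of_nonneg_left hslp hs0
        linarith only [h1, hprod]
    have hEWBb : 2 * (EWB:ℤ) ≤ 2 * q * W + ((S:ℤ) - q * B) * m2 := by
      have hc1 : 2 * (EWB:ℤ) = ∑ e ∈ Efin P c, 2 * (wB m2 (deg1E P e) : ℤ) := by
        rw [hEWBd, Nat.cast_sum, Finset.mul_sum]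
      have hc2 : ∑ e ∈ Efin P c, 2 * (wB m2 (deg1E P e) : ℤ)
          ≤ ∑ e ∈ Efin P c, (2 * (W:ℤ) + ((deg1E P e : ℤ) - B) * m2) :=
        Finset.sum_le_sum (fun e _ => hslope1 _)
      have hc3 : ∑ e ∈ Efin P c, (2 * (W:ℤ) + ((deg1E P e : ℤ) - B) * m2)
          = 2 * q * W + ((S:ℤ) - q * B) * m2 := by
        rw [Finset.sum_add_distrib, Finset.sum_const, ← Finset.sum_mul,
          Finset.sum_sub_distrib, Finset.sum_const, ← hScast, hEcard, nsmul_eq_mul,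
          nsmul_eq_mul]
        push_cast
        ring
      rw [hc1, ← hc3]
      exact hc2
    -- combine
    have hkey : 2 * (wComp P c : ℤ) ≤ 2 * m2 * q + 2 * q * W + q * k * m2 := by
      have hwle : (wComp P c : ℤ) ≤ m2 * n2c + EWB := by
        have : wComp P c ≤ m2 * n2c + EWB := by omega
        exact_mod_cast this
      have hSTz : (S:ℤ) + T = n1 * q := by exact_mod_cast hST
      have h2Tz : 2 * (n2c:ℤ) ≤ T := by exact_mod_cast h2T
      have hn1z : (n1:ℤ) = 2 + B + k := by
        rw [hBd]; exact_mod_cast hn1B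
      have hm2z : (0:ℤ) ≤ m2 := by positivity
      -- 2*(m2*n2c) + (S - qB)*m2 ≤ 2*m2*q + q*k*m2  since  2 n2c + S ≤ q(2+B+k)
      have hlin : 2 * (n2c:ℤ) + S ≤ q * (2 + B + k) := by
        have e1 : (n1:ℤ) * q = q * (2 + B + k) := by rw [hn1z]; ring
        omega
      have hprod := mul_le_mul_of_nonneg_right hlin hm2z
      linarith only [hwle, hEWBb, hprod]
    -- cast to ℝ
    rw [hm2rval]
    have hkeyR : 2 * (wComp P c : ℝ) ≤ 2 * m2 * q + 2 * q * W + q * k * m2 := by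
      exact_mod_cast hkey
    have heq : 2 * (((m2:ℝ) + W + (m2:ℝ) * k / 2) * q)
        = 2 * m2 * q + 2 * q * W + q * k * m2 := by ring
    linarith only [hkeyR, heq]
  -- Parts 2 and 3 share the following
  have hkC : j < ((fl : ℕ) : ℤ) → (k : ℤ) < Nat.choose m2 jn := by
    intro hjlt
    rcases hcond with ⟨h1, h2⟩ | h1
    · exact h2
    · omega
  have part23 : j < ((fl : ℕ) : ℤ) →
      ((nV ≤ (n1 - 1) * q → (wComp P c : ℝ) ≤ m2 * r * q) ∧
       (nV = (n1 - 1) * q + 1 →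
         (wComp P c : ℝ) - r * m2 * q ≤ (m2:ℝ) - 2 * j - dComp P c)) := by
    intro hjlt
    have hkCv := hkC hjlt
    have hkn : k < Nat.choose m2 jn := by exact_mod_cast hkCv
    have hjnfl : jn ≤ fl := by omega
    have hjnm2 : jn ≤ m2 := by omega
    have h2jn : 2 * jn ≤ m2 - 1 := by omega
    set B := binPartial m2 jn with hBd
    have hn12 : n1 - 2 = B + k := by omega
    have hwn : wB m2 (n1 - 2)
        = (∑ i ∈ Finset.range jn, (m2 - i) * Nat.choose m2 i) + k * (m2 - jn) := by
      rw [hn12, hBd]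
      exact wB_closed m2 jn k hjnm2 hkn
    have hwBtn : wBt m2 (n1 - 2) = jn := by
      rw [hn12, hBd]
      exact wBt_closed m2 jn k hjnm2 hkn
    have hr' : r = 1 + (∑ i ∈ Finset.range jn, ((m2 - i : ℝ)/m2) * Nat.choose m2 i)
        + ((m2:ℝ) - j - 1)/m2 * k := by
      rw [hr, if_pos hjlt]
    have hm2rval : (m2:ℝ) * r = m2 + (wB m2 (n1 - 2) : ℕ) := by
      rw [hr', mul_add, mul_add, mul_one]
      have hterm : ∀ i ∈ Finset.range jn,
          (m2:ℝ) * (((m2:ℝ) - i)/m2 * Nat.choose m2 i)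
            = ((m2:ℝ) - i) * Nat.choose m2 i := by
        intro i _
        field_simp
      rw [Finset.mul_sum, Finset.sum_congr rfl hterm]
      have hsumcast : ((∑ i ∈ Finset.range jn, (m2 - i) * Nat.choose m2 i : ℕ) : ℝ)
          = ∑ i ∈ Finset.range jn, ((m2:ℝ) - i) * Nat.choose m2 i := by
        push_cast
        refine Finset.sum_congr rfl ?_
        intro i hi
        have : i ≤ m2 := le_trans (le_of_lt (Finset.mem_range.1 hi)) hjnm2
        rw [Nat.cast_sub this]
      have hwcast : ((wB m2 (n1 - 2) : ℕ) : ℝ)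
          = (∑ i ∈ Finset.range jn, ((m2:ℝ) - i) * Nat.choose m2 i)
            + k * ((m2:ℝ) - jn) := by
        rw [hwn, Nat.cast_add, Nat.cast_mul, Nat.cast_sub hjnm2, hsumcast]
      rw [hwcast]
      have hjcast : ((m2:ℝ) - j - 1) = ((m2:ℝ) - jn) := by
        have : ((jn:ℕ):ℝ) = (j:ℝ) + 1 := by exact_mod_cast hjnz
        rw [this]; ring
      rw [hjcast]
      have : (m2:ℝ) * (((m2:ℝ) - jn)/m2 * k) = ((m2:ℝ) - jn) * k := by
        field_simp
      rw [this]
      ring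
    have hslope : ∀ s : ℕ, s ≤ n1 →
        (wB m2 s : ℤ) ≤ wB m2 (n1-2) + ((s:ℤ) - ((n1:ℤ)-2)) * ((m2:ℤ) - jn) := by
      intro s hsn
      rcases le_or_gt (n1 - 2) s with hcs | hcs
      · have h1 := wB_le_above' m2 (n1-2) s hcs (by omega)
        rw [hwBtn] at h1
        have : ((n1 - 2 : ℕ) : ℤ) = (n1:ℤ) - 2 := by omega
        rw [this] at h1
        exact h1
      · have hu : ∀ z, s ≤ z → z < n1 - 2 → wBt m2 z ≤ jn := by
          intro z _ hz
          have hzb : z < binPartial m2 (jn + 1) := by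
            rw [binPartial_succ]
            omega
          have := wBt_lt m2 z (jn + 1) hzb
          omega
        have h1 := wB_ge_below' m2 jn s (n1-2) (le_of_lt hcs) hu hjnm2
        have : ((n1 - 2 : ℕ) : ℤ) = (n1:ℤ) - 2 := by omega
        rw [this] at h1
        linarith
    have hEWBb : (EWB:ℤ) ≤ q * wB m2 (n1-2) + ((S:ℤ) - q * ((n1:ℤ)-2)) * ((m2:ℤ) - jn) := by
      have hc1 : (EWB:ℤ) = ∑ e ∈ Efin P c, (wB m2 (deg1E P e) : ℤ) := by
        rw [hEWBd]; exact Nat.cast_sum _ _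
      have hc2 : ∑ e ∈ Efin P c, (wB m2 (deg1E P e) : ℤ)
          ≤ ∑ e ∈ Efin P c,
            ((wB m2 (n1-2) : ℤ) + ((deg1E P e : ℤ) - ((n1:ℤ)-2)) * ((m2:ℤ) - jn)) :=
        Finset.sum_le_sum (fun e _ => hslope _ (deg1E_le hreg e))
      have hc3 : ∑ e ∈ Efin P c,
            ((wB m2 (n1-2) : ℤ) + ((deg1E P e : ℤ) - ((n1:ℤ)-2)) * ((m2:ℤ) - jn))
          = q * wB m2 (n1-2) + ((S:ℤ) - q * ((n1:ℤ)-2)) * ((m2:ℤ) - jn) := by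
        rw [Finset.sum_add_distrib, Finset.sum_const, ← Finset.sum_mul,
          Finset.sum_sub_distrib, Finset.sum_const, ← hScast, hEcard, nsmul_eq_mul,
          nsmul_eq_mul]
        try push_cast
        try ring
      rw [hc1, ← hc3]
      exact hc2
    -- common integer facts
    have hSTz : (S:ℤ) + T = n1 * q := by exact_mod_cast hST
    have h2Tz : 2 * (n2c:ℤ) ≤ T := by exact_mod_cast h2T
    have hpartz : (V1.card : ℤ) + n2c = nV := by exact_mod_cast hparts
    have hSV1z : (S:ℤ) = V1.card := by exact_mod_cast hSV1
    have hjnz2 : (0:ℤ) ≤ (m2:ℤ) - jn := by omega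
    have h2jnz : 2 * (jn:ℤ) ≤ (m2:ℤ) - 1 := by omega
    constructor
    · -- non-tree bound
      intro hnVle
      have hnVz : (nV:ℤ) ≤ ((n1:ℤ) - 1) * q := by
        have h := hnVle
        zify [show 1 ≤ n1 by omega] at h
        exact h
      have hkey : (wComp P c : ℤ) + dComp P c ≤ q * (m2 + wB m2 (n1-2)) := by
        have hwdz : (wComp P c : ℤ) + dComp P c = m2 * n2c + EWB := by exact_mod_cast hwd
        have hS1 : (S:ℤ) = nV - n2c := by omega
        have e1 : (n1:ℤ) * q = ((n1:ℤ) - 1) * q + q := by ring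
        have e2 : ((n1:ℤ) - 1) * q = q * ((n1:ℤ) - 2) + q := by ring
        rcases le_or_gt (n2c:ℤ) q with hcase | hcase
        · have hb1 : (S:ℤ) - q * ((n1:ℤ)-2) ≤ q - n2c := by omega
          have hb2 : ((S:ℤ) - q * ((n1:ℤ)-2)) * ((m2:ℤ) - jn) ≤ (q - n2c) * ((m2:ℤ) - jn) :=
            mul_le_mul_of_nonneg_right hb1 hjnz2
          have hprod := mul_nonneg (by omega : (0:ℤ) ≤ (q:ℤ) - n2c)
            (by omega : (0:ℤ) ≤ (jn:ℤ))
          linarith only [hwdz, hEWBb, hb2, hprod]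
        · have hb1 : (S:ℤ) - q * ((n1:ℤ)-2) ≤ 2 * q - 2 * n2c := by omega
          have hb2 : ((S:ℤ) - q * ((n1:ℤ)-2)) * ((m2:ℤ) - jn)
              ≤ (2 * q - 2 * n2c) * ((m2:ℤ) - jn) :=
            mul_le_mul_of_nonneg_right hb1 hjnz2
          have hprod := mul_nonneg (by omega : (0:ℤ) ≤ (n2c:ℤ) - q)
            (by omega : (0:ℤ) ≤ (m2:ℤ) - 1 - 2 * jn)
          linarith only [hwdz, hEWBb, hb2, hprod, hcase]
      have hkeyR : (wComp P c : ℝ) + dComp P c ≤ q * ((m2:ℝ) + (wB m2 (n1-2) : ℕ)) := by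
        exact_mod_cast hkey
      have hd0 : (0:ℝ) ≤ dComp P c := Nat.cast_nonneg _
      rw [show (m2:ℝ) * r * q = ((m2:ℝ) * r) * q from rfl, hm2rval]
      linarith only [hkeyR, hd0]
    · -- tree bound
      intro hnVeq
      have hnVz : (nV:ℤ) = ((n1:ℤ) - 1) * q + 1 := by
        have h := hnVeq
        zify [show 1 ≤ n1 by omega] at h
        exact h
      have hkey : (wComp P c : ℤ) + dComp P c
          ≤ q * (m2 + wB m2 (n1-2)) + m2 - 2 * j := by
        have hwdz : (wComp P c : ℤ) + dComp P c = m2 * n2c + EWB := by exact_mod_cast hwd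
        have hS1 : (S:ℤ) = nV - n2c := by omega
        have e1 : (n1:ℤ) * q = ((n1:ℤ) - 1) * q + q := by ring
        have e2 : ((n1:ℤ) - 1) * q = q * ((n1:ℤ) - 2) + q := by ring
        have hT1 : (T:ℤ) = q + n2c - 1 := by omega
        have hn2cq : (n2c:ℤ) ≤ q - 1 := by omega
        have hb1 : (S:ℤ) - q * ((n1:ℤ)-2) = q + 1 - n2c := by omega
        have hjz : (j:ℤ) = (jn:ℤ) - 1 := by omega
        rw [hb1] at hEWBb
        have hprod := mul_nonneg (by omega : (0:ℤ) ≤ (q:ℤ) - 1 - n2c)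
          (by omega : (0:ℤ) ≤ (jn:ℤ))
        linarith only [hwdz, hEWBb, hprod, hjz]
      have hkeyR : (wComp P c : ℝ) + dComp P c
          ≤ q * ((m2:ℝ) + (wB m2 (n1-2) : ℕ)) + m2 - 2 * j := by
        exact_mod_cast hkey
      have heq2 : r * (m2:ℝ) * q = ((m2:ℝ) + (wB m2 (n1-2) : ℕ)) * q := by
        rw [← hm2rval]; ring
      linarith only [hkeyR, heq2]
  -- assemble
  refine ⟨?_, ?_, ?_⟩
  · intro hjf
    exact part1 hjf
  · intro hjlt hple
    have hnVle : nV ≤ (n1 - 1) * q := by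
      have hcast2 : (((n1 - 1) * q : ℕ) : ℚ) = ((n1:ℚ) - 1) * q := by
        push_cast [Nat.cast_sub (show 1 ≤ n1 by omega)]
        ring
      have hcast : ((nV:ℚ)) ≤ (((n1 - 1) * q : ℕ) : ℚ) := by
        rw [hcast2, hp]
        linarith [hple]
      exact_mod_cast hcast
    exact (part23 hjlt).1 hnVle
  · intro hv
    have hjlt : j < ((fl : ℕ) : ℤ) := by
      rcases hcond with ⟨h1, _⟩ | h1
      · exact h1
      · exfalso
        have hb := part1 h1
        have he : (m2:ℝ) * r * q = r * m2 * q := by ring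
        linarith
    have hnVlow : ¬ nV ≤ (n1 - 1) * q := by
      intro hle
      have hb := (part23 hjlt).1 hle
      have he : (m2:ℝ) * r * q = r * m2 * q := by ring
      linarith
    have hnVeq : nV = (n1 - 1) * q + 1 := by
      have hn1q : (n1 - 1) * q + q = n1 * q := by
        have h2 : n1 - 1 + 1 = n1 := by omega
        calc (n1 - 1) * q + q = ((n1 - 1) + 1) * q := by ring
          _ = n1 * q := by rw [h2]
      omega
    exact ⟨hjlt, hnVeq, (part23 hjlt).2 hnVeq⟩
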